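/- (Euclidean core of Lemma 3.8: Gronwall estimate for a second-order differential inequality with jumps in the derivative.) Let d ≥ 1 be an integer, C ≥ 1, J ∈ ℕ, and 0 = t₀ < t₁ < … < t_J. Let z : [0,∞) → ℝ^d be continuous and suppose that on each of the intervals [t_j, t_{j+1}] (j = 0,…,J−1) and [t_J, ∞) the restriction of z is twice continuously differentiable (with one-sided derivatives at the endpoints) and satisfies ‖z''(t)‖ ≤ C‖z(t)‖ in the interior. Let F₀, F₁, …, F_J ≥ 0 be such that (‖z(0)‖² + ‖z'(0⁺)‖²)^{1/2} ≤ F₀ and ‖z'(t_j⁺) − z'(t_j⁻)‖ ≤ F_j for j = 1,…,J, where z'(t_j⁻) and z'(t_j⁺) denote the one-sided derivatives at t_j from the left and right pieces. Then for every t ≥ 0, ‖z(t)‖ ≤ e^{Ct} F₀ + Σ_{j ≥ 1, t_j ≤ t} e^{C(t − t_j)} F_j. -/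

import Mathlib

open MeasureTheory Set
open scoped Classical

noncomputable section

/-- Per-piece Grönwall estimate for the "energy" `max ‖Φ s‖ ‖Φ' s‖`. -/
lemma piece_bound {E : Type*} [NormedAddCommGroup E] [NormedSpace ℝ E]
    {Φ : ℝ → E} (hΦ : ContDiff ℝ 2 Φ) {C a b : ℝ} (hC : 1 ≤ C)
    (hbound : ∀ s ∈ Ioo a b, ‖iteratedDeriv 2 Φ s‖ ≤ C * ‖Φ s‖) :
    ∀ s ∈ Icc a b,
      max ‖Φ s‖ ‖deriv Φ s‖ ≤ Real.exp (C * (s - a)) * max ‖Φ a‖ ‖deriv Φ a‖ := by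
  have hdiff : Differentiable ℝ Φ := hΦ.differentiable (by norm_num)
  have hΦ' : ContDiff ℝ 1 (deriv Φ) := by
    have := (contDiff_succ_iff_deriv (f := Φ) (n := 1)).mp (by exact_mod_cast hΦ)
    exact this.2.2
  have hdd : Differentiable ℝ (deriv Φ) := hΦ'.differentiable one_ne_zero
  have hcontdd : Continuous (deriv (deriv Φ)) := hΦ'.continuous_deriv le_rfl
  have hi2 : iteratedDeriv 2 Φ = deriv (deriv Φ) := by
    rw [iteratedDeriv_succ, iteratedDeriv_one]
  set g : ℝ → E × E := fun s => (Φ s, deriv Φ s) with hg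
  set g' : ℝ → E × E := fun s => (deriv Φ s, deriv (deriv Φ) s) with hg'def
  have hg' : ∀ s, HasDerivAt g (g' s) s := fun s =>
    HasDerivAt.prodMk (hdiff s).hasDerivAt (hdd s).hasDerivAt
  have hbound' : ∀ s ∈ Ico a b, ‖g' s‖ ≤ C * ‖g s‖ + 0 := by
    intro s hs
    have hab : a < b := lt_of_le_of_lt hs.1 hs.2
    have hcl : s ∈ closure (Ioo a b) := by
      rw [closure_Ioo hab.ne]; exact ⟨hs.1, hs.2.le⟩
    have h2 : ‖deriv (deriv Φ) s‖ ≤ C * ‖Φ s‖ := by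
      have hclosed : IsClosed {x : ℝ | ‖deriv (deriv Φ) x‖ ≤ C * ‖Φ x‖} :=
        isClosed_le (hcontdd.norm) (continuous_const.mul hdiff.continuous.norm)
      have hsub : Ioo a b ⊆ {x : ℝ | ‖deriv (deriv Φ) x‖ ≤ C * ‖Φ x‖} := by
        intro x hx; have := hbound x hx; rwa [hi2] at this
      exact (hclosed.closure_subset_iff.mpr hsub) hcl
    have hmax0 : (0:ℝ) ≤ max ‖Φ s‖ ‖deriv Φ s‖ :=
      le_trans (norm_nonneg _) (le_max_left _ _)
    rw [add_zero]
    have hng : ‖g s‖ = max ‖Φ s‖ ‖deriv Φ s‖ := rfl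
    have hng' : ‖g' s‖ = max ‖deriv Φ s‖ ‖deriv (deriv Φ) s‖ := rfl
    rw [hng, hng']
    apply max_le
    · calc ‖deriv Φ s‖ ≤ max ‖Φ s‖ ‖deriv Φ s‖ := le_max_right _ _
        _ = 1 * max ‖Φ s‖ ‖deriv Φ s‖ := (one_mul _).symm
        _ ≤ C * max ‖Φ s‖ ‖deriv Φ s‖ := by
            apply mul_le_mul_of_nonneg_right hC hmax0
    · calc ‖deriv (deriv Φ) s‖ ≤ C * ‖Φ s‖ := h2
        _ ≤ C * max ‖Φ s‖ ‖deriv Φ s‖ := by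
            apply mul_le_mul_of_nonneg_left (le_max_left _ _) (le_trans zero_le_one hC)
  intro s hs
  have := norm_le_gronwallBound_of_norm_deriv_right_le
    (f := g) (f' := g') (δ := ‖g a‖) (K := C) (ε := 0) (a := a) (b := b)
    ((hdiff.continuous.prodMk hdd.continuous).continuousOn)
    (fun x _ => (hg' x).hasDerivWithinAt) le_rfl hbound' s hs
  rw [gronwallBound_ε0] at this
  have hga : ‖g a‖ = max ‖Φ a‖ ‖deriv Φ a‖ := rfl
  have hgs : ‖g s‖ = max ‖Φ s‖ ‖deriv Φ s‖ := rfl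
  rw [hga, hgs, mul_comm] at this
  exact this

/-- (Euclidean core of Lemma 3.8: Gronwall estimate for a
second-order differential inequality with jumps in the derivative.)

The piecewise-C² structure of `z` is encoded by C² extensions `Φ j : ℝ → ℝ^d`
of the restrictions of `z` to the closed subintervals `[t_j, t_{j+1}]`
(`j = 0, …, J−1`) and `[t_J, ∞)`; one-sided derivatives of `z` at the nodes are
the derivatives of these extensions. -/
theorem gronwall_with_jumps (d : ℕ) (hd : 1 ≤ d) (C : ℝ) (hC : 1 ≤ C) (J : ℕ)
    (t : ℕ → ℝ) (ht0 : t 0 = 0) (htmono : ∀ j < J, t j < t (j + 1))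
    (z : ℝ → EuclideanSpace ℝ (Fin d)) (hz : ContinuousOn z (Ici 0))
    (Φ : ℕ → ℝ → EuclideanSpace ℝ (Fin d))
    (hΦ : ∀ j ≤ J, ContDiff ℝ 2 (Φ j))
    (hagree : ∀ j < J, ∀ s ∈ Icc (t j) (t (j + 1)), z s = Φ j s)
    (hagreeJ : ∀ s ∈ Ici (t J), z s = Φ J s)
    (hODE : ∀ j < J, ∀ s ∈ Ioo (t j) (t (j + 1)),
      ‖iteratedDeriv 2 (Φ j) s‖ ≤ C * ‖z s‖)
    (hODEJ : ∀ s ∈ Ioi (t J), ‖iteratedDeriv 2 (Φ J) s‖ ≤ C * ‖z s‖)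
    (F : ℕ → ℝ) (hF : ∀ j ≤ J, 0 ≤ F j)
    (hF0 : Real.sqrt (‖z 0‖ ^ 2 + ‖deriv (Φ 0) 0‖ ^ 2) ≤ F 0)
    (hjump : ∀ j, 1 ≤ j → j ≤ J →
      ‖deriv (Φ j) (t j) - deriv (Φ (j - 1)) (t j)‖ ≤ F j) :
    ∀ s : ℝ, 0 ≤ s →
      ‖z s‖ ≤ Real.exp (C * s) * F 0 +
        ∑ j ∈ (Finset.Icc 1 J).filter (fun j => t j ≤ s),
          Real.exp (C * (s - t j)) * F j := by
  -- monotonicity of the nodes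
  have hmono : ∀ i k, i ≤ k → k ≤ J → t i ≤ t k := by
    intro i k hik hkJ
    induction k with
    | zero => simp_all
    | succ k ih =>
      rcases Nat.eq_or_lt_of_le hik with h | h
      · rw [h]
      · exact le_trans (ih (Nat.lt_succ_iff.mp h) (le_trans (Nat.le_succ _) hkJ))
          (htmono k (Nat.lt_of_succ_le hkJ)).le
  -- the node bound
  set B : ℕ → ℝ := fun j => Real.exp (C * t j) * F 0 +
    ∑ i ∈ Finset.Icc 1 j, Real.exp (C * (t j - t i)) * F i with hB
  -- z agrees with Φ j on its piece (left form for node values)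
  have hnodeval : ∀ j ≤ J, z (t j) = Φ j (t j) := by
    intro j hjJ
    rcases Nat.eq_or_lt_of_le hjJ with h | h
    · subst h; exact hagreeJ _ Set.self_mem_Ici
    · exact hagree j h _ ⟨le_rfl, (htmono j h).le⟩
  have hnode : ∀ j, j ≤ J →
      max ‖Φ j (t j)‖ ‖deriv (Φ j) (t j)‖ ≤ B j := by
    intro j
    induction j with
    | zero =>
      intro _
      have hz0 : z 0 = Φ 0 0 := by
        have := hnodeval 0 (Nat.zero_le _); rwa [ht0] at this
      have hBz : B 0 = F 0 := by
        simp [hB, ht0]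
      rw [hBz, ht0, ← hz0]
      have hsq : ∀ x y : ℝ, 0 ≤ x → 0 ≤ y → max x y ≤ Real.sqrt (x ^ 2 + y ^ 2) := by
        intro x y hx hy
        apply max_le
        · exact Real.le_sqrt_of_sq_le (by nlinarith)
        · exact Real.le_sqrt_of_sq_le (by nlinarith)
      exact le_trans (hsq _ _ (norm_nonneg _) (norm_nonneg _)) hF0
    | succ j ih =>
      intro hjJ
      have hjlt : j < J := Nat.lt_of_succ_le hjJ
      have hjle : j ≤ J := hjlt.le
      have hIH := ih hjle
      -- piece estimate on [t j, t (j+1)]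
      have hpiece := piece_bound (hΦ j hjle) hC
        (C := C) (a := t j) (b := t (j+1))
        (fun s hs => by
          have := hODE j hjlt s hs
          rwa [hagree j hjlt s ⟨hs.1.le, hs.2.le⟩] at this)
        (t (j+1)) ⟨(htmono j hjlt).le, le_rfl⟩
      -- value agreement at node j+1
      have hval : Φ (j+1) (t (j+1)) = Φ j (t (j+1)) := by
        rw [← hnodeval (j+1) hjJ]
        exact hagree j hjlt _ ⟨(htmono j hjlt).le, le_rfl⟩
      have hjmp : ‖deriv (Φ (j+1)) (t (j+1)) - deriv (Φ j) (t (j+1))‖ ≤ F (j+1) := by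
        have := hjump (j+1) (Nat.le_add_left _ _) hjJ
        simpa using this
      have hder : ‖deriv (Φ (j+1)) (t (j+1))‖ ≤ ‖deriv (Φ j) (t (j+1))‖ + F (j+1) := by
        calc ‖deriv (Φ (j+1)) (t (j+1))‖
            = ‖deriv (Φ j) (t (j+1)) + (deriv (Φ (j+1)) (t (j+1)) - deriv (Φ j) (t (j+1)))‖ := by
              congr 1; abel
          _ ≤ ‖deriv (Φ j) (t (j+1))‖ + ‖deriv (Φ (j+1)) (t (j+1)) - deriv (Φ j) (t (j+1))‖ :=
              norm_add_le _ _
          _ ≤ _ := by linarith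
      have hFj1 : 0 ≤ F (j+1) := hF _ hjJ
      have hstep : max ‖Φ (j+1) (t (j+1))‖ ‖deriv (Φ (j+1)) (t (j+1))‖ ≤
          max ‖Φ j (t (j+1))‖ ‖deriv (Φ j) (t (j+1))‖ + F (j+1) := by
        apply max_le
        · rw [hval]
          exact le_add_of_le_of_nonneg (le_max_left _ _) hFj1
        · exact le_trans hder (add_le_add_left (le_max_right _ _) _)
      have hexp0 : (0:ℝ) ≤ Real.exp (C * (t (j+1) - t j)) := (Real.exp_pos _).le
      have hchain : max ‖Φ (j+1) (t (j+1))‖ ‖deriv (Φ (j+1)) (t (j+1))‖ ≤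
          Real.exp (C * (t (j+1) - t j)) * B j + F (j+1) := by
        refine le_trans hstep (add_le_add_left (le_trans hpiece ?_) _)
        exact mul_le_mul_of_nonneg_left hIH hexp0
      refine le_trans hchain ?_
      -- expand B (j+1)
      have hBexp : Real.exp (C * (t (j+1) - t j)) * B j + F (j+1) = B (j+1) := by
        have h1 : Real.exp (C * (t (j+1) - t j)) * (Real.exp (C * t j) * F 0)
            = Real.exp (C * t (j+1)) * F 0 := by
          rw [← mul_assoc, ← Real.exp_add]; ring_nf
        have h2 : ∀ i, i ∈ Finset.Icc 1 j → Real.exp (C * (t (j+1) - t j)) * (Real.exp (C * (t j - t i)) * F i)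
            = Real.exp (C * (t (j+1) - t i)) * F i := by
          intro i _; rw [← mul_assoc, ← Real.exp_add]; ring_nf
        have hsum := Finset.sum_congr rfl h2
        have h3 : Real.exp (C * (t (j+1) - t (j+1))) * F (j+1) = F (j+1) := by
          simp
        simp only [hB]
        rw [Finset.sum_Icc_succ_top (Nat.one_le_iff_ne_zero.mpr (Nat.succ_ne_zero j)), h3,
          mul_add, Finset.mul_sum, h1, hsum]
        ring
      rw [hBexp]
  -- final bound from a node bound
  have hfinal : ∀ j ≤ J, ∀ s, t j ≤ s →
      Real.exp (C * (s - t j)) * B j ≤ Real.exp (C * s) * F 0 +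
        ∑ i ∈ (Finset.Icc 1 J).filter (fun i => t i ≤ s),
          Real.exp (C * (s - t i)) * F i := by
    intro j hjJ s hts
    have hexpand : Real.exp (C * (s - t j)) * B j = Real.exp (C * s) * F 0 +
        ∑ i ∈ Finset.Icc 1 j, Real.exp (C * (s - t i)) * F i := by
      rw [hB]
      simp only [mul_add, Finset.mul_sum]
      have h1 : Real.exp (C * (s - t j)) * (Real.exp (C * t j) * F 0)
          = Real.exp (C * s) * F 0 := by
        rw [← mul_assoc, ← Real.exp_add]; ring_nf
      have h2 : ∀ i, Real.exp (C * (s - t j)) * (Real.exp (C * (t j - t i)) * F i)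
          = Real.exp (C * (s - t i)) * F i := by
        intro i; rw [← mul_assoc, ← Real.exp_add]; ring_nf
      rw [h1]
      congr 1
      exact Finset.sum_congr rfl (fun i _ => h2 i)
    rw [hexpand]
    apply add_le_add_right
    apply Finset.sum_le_sum_of_subset_of_nonneg
    · intro i hi
      rw [Finset.mem_Icc] at hi
      rw [Finset.mem_filter, Finset.mem_Icc]
      exact ⟨⟨hi.1, le_trans hi.2 hjJ⟩, le_trans (hmono i j hi.2 hjJ) hts⟩
    · intro i hi _
      rw [Finset.mem_filter, Finset.mem_Icc] at hi
      exact mul_nonneg (Real.exp_pos _).le (hF i hi.1.2)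
  intro s hs
  by_cases hsJ : t J ≤ s
  · -- last piece
    have hpiece := piece_bound (hΦ J le_rfl) hC
      (C := C) (a := t J) (b := s)
      (fun x hx => by
        have := hODEJ x hx.1
        rwa [hagreeJ x hx.1.le] at this)
      s ⟨hsJ, le_rfl⟩
    have hzs : z s = Φ J s := hagreeJ s hsJ
    have : ‖z s‖ ≤ Real.exp (C * (s - t J)) * B J := by
      rw [hzs]
      exact le_trans (le_max_left _ _) (le_trans hpiece
        (mul_le_mul_of_nonneg_left (hnode J le_rfl) (Real.exp_pos _).le))
    exact le_trans this (hfinal J le_rfl s hsJ)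
  · -- find the piece containing s
    push_neg at hsJ
    set j := Nat.findGreatest (fun k => t k ≤ s) J with hj
    have hP0 : t 0 ≤ s := by rw [ht0]; exact hs
    have hPj : t j ≤ s :=
      Nat.findGreatest_spec (P := fun k => t k ≤ s) (Nat.zero_le J) hP0
    have hjJ : j ≤ J := Nat.findGreatest_le J
    have hjlt : j < J := by
      rcases Nat.eq_or_lt_of_le hjJ with h | h
      · exfalso; rw [h] at hPj; exact absurd hPj (not_le.mpr hsJ)
      · exact h
    have hslt : s < t (j+1) := by
      by_contra h
      push_neg at h
      exact Nat.findGreatest_is_greatest (P := fun k => t k ≤ s)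
        (Nat.lt_succ_self j) (Nat.succ_le_of_lt hjlt) h
    have hpiece := piece_bound (hΦ j hjJ) hC
      (C := C) (a := t j) (b := t (j+1))
      (fun x hx => by
        have := hODE j hjlt x hx
        rwa [hagree j hjlt x ⟨hx.1.le, hx.2.le⟩] at this)
      s ⟨hPj, hslt.le⟩
    have hzs : z s = Φ j s := hagree j hjlt s ⟨hPj, hslt.le⟩
    have : ‖z s‖ ≤ Real.exp (C * (s - t j)) * B j := by
      rw [hzs]
      exact le_trans (le_max_left _ _) (le_trans hpiece
        (mul_le_mul_of_nonneg_left (hnode j hjJ) (Real.exp_pos _).le))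
    exact le_trans this (hfinal j hjJ s hPj)
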